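/- Let ⪯ be a linear order on ℕ and let s : ℕ → ℕ be a sequence with s 0 ≺ s 1 ≺ s 2 ≺ ⋯ (strictly ⪯-increasing). Then the set S = { s j : for all i < j, s i < s j } is infinite, and for all x, y ∈ S, x ≤ y if and only if x ⪯ y. -/

import Mathlib

theorem stmt_1 (le' : ℕ → ℕ → Prop) (hlin : IsLinearOrder ℕ le') (s : ℕ → ℕ)
    (hs : ∀ i j : ℕ, i < j → le' (s i) (s j) ∧ s i ≠ s j) :
    {x : ℕ | ∃ j : ℕ, x = s j ∧ ∀ i < j, s i < s j}.Infinite ∧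
      ∀ x ∈ {x : ℕ | ∃ j : ℕ, x = s j ∧ ∀ i < j, s i < s j},
        ∀ y ∈ {x : ℕ | ∃ j : ℕ, x = s j ∧ ∀ i < j, s i < s j},
          (x ≤ y ↔ le' x y) := by
  have hinj : Function.Injective s := by
    intro i j hij
    by_contra hne
    rcases lt_trichotomy i j with h | h | h
    · exact (hs i j h).2 hij
    · exact hne h
    · exact (hs j i h).2 hij.symm
  constructor
  · -- For each n there is a record value > n
    have key : ∀ n : ℕ, ∃ x ∈ {x : ℕ | ∃ j : ℕ, x = s j ∧ ∀ i < j, s i < s j}, n < x := by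
      intro n
      have hex : ∃ k, n < s k := by
        by_contra h
        push_neg at h
        have : (Set.range s).Finite := (Set.finite_Iic n).subset (by
          rintro x ⟨k, rfl⟩; exact h k)
        exact (Set.infinite_range_of_injective hinj) this
      classical
      refine ⟨s (Nat.find hex), ⟨Nat.find hex, rfl, fun i hi => ?_⟩, Nat.find_spec hex⟩
      exact lt_of_le_of_lt (le_of_not_gt (Nat.find_min hex hi)) (Nat.find_spec hex)
    exact Set.infinite_of_not_bddAbove (by
      rintro ⟨b, hb⟩
      obtain ⟨x, hx, hbx⟩ := key b
      exact absurd (hb hx) (not_le_of_gt hbx))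
  · rintro x ⟨j, rfl, hj⟩ y ⟨k, rfl, hk⟩
    rcases lt_trichotomy j k with h | h | h
    · have h1 := (hs j k h).1
      have h2 := hk j h
      exact ⟨fun _ => h1, fun _ => le_of_lt h2⟩
    · subst h
      exact ⟨fun _ => hlin.toIsPartialOrder.toIsPreorder.toRefl.refl _,
        fun _ => le_refl _⟩
    · have h1 := (hs k j h).1
      have h2 := hj k h
      constructor
      · intro hle
        exact absurd hle (not_le_of_gt h2)
      · intro hle
        exact absurd (hlin.toIsPartialOrder.toAntisymm.antisymm _ _ hle h1)
          ((hs k j h).2.symm)
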